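/- Let q be odd with q ≡ -1 (mod 3), and let ρ ∈ F_q^*. Then the number of γ ∈ F_q^* such that the cubic t^3 - 3γt^2 - ρ has exactly one root t in F_q equals (q-3)/2. -/
import Mathlib

section Aux

variable {F : Type*} [Field F] [Fintype F]

/-- When `q ≡ 2 mod 3`, cubing is injective on `F`. -/
lemma aux_cube_inj (hq : Fintype.card F % 3 = 2) :
    Function.Injective (fun x : F => x ^ 3) := by
  classical
  have hcop : (Nat.card Fˣ).Coprime 3 := by
    have hcard : Nat.card Fˣ = Fintype.card F - 1 := by
      rw [Nat.card_units, Nat.card_eq_fintype_card]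
    rw [hcard]
    have h3 : ¬ (3 ∣ Fintype.card F - 1) := by omega
    exact (Nat.coprime_comm.mp ((Nat.prime_three).coprime_iff_not_dvd.mpr h3))
  have hbij := hcop.pow_left_bijective
  intro a b hab
  simp only at hab
  by_cases ha : a = 0
  · subst ha
    have : b = 0 := by
      have hb3 : b ^ 3 = 0 := by rw [← hab]; ring
      exact (pow_eq_zero_iff (three_ne_zero)).mp hb3
    exact this.symm
  by_cases hb : b = 0
  · subst hb
    have ha3 : a ^ 3 = 0 := by rw [hab]; ring
    exact (pow_eq_zero_iff (three_ne_zero)).mp ha3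
  · have hu : (Units.mk0 a ha) ^ 3 = (Units.mk0 b hb) ^ 3 := by
      ext
      simpa using hab
    have := hbij.injective hu
    simpa [Units.ext_iff] using this

/-- The number of nonsquares in an odd-characteristic finite field. -/
lemma aux_card_nonsquares (h2 : ringChar F ≠ 2) :
    Set.ncard {a : F | ¬ IsSquare a} = (Fintype.card F - 1) / 2 := by
  classical
  have hsum := quadraticChar_sum_zero (F := F) h2
  have hsplit := Finset.sum_filter_add_sum_filter_not Finset.univ
    (fun a : F => IsSquare a) (fun a : F => quadraticChar F a)
  have h0mem : (0 : F) ∈ Finset.univ.filter (fun a : F => IsSquare a) := by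
    simp only [Finset.mem_filter, Finset.mem_univ, true_and]
    exact ⟨0, by ring⟩
  have hss : (∑ a ∈ Finset.univ.filter (fun a : F => IsSquare a), quadraticChar F a)
      = ((Finset.univ.filter (fun a : F => IsSquare a)).card : ℤ) - 1 := by
    rw [← Finset.sum_erase_add _ _ h0mem, quadraticChar_zero, add_zero]
    have hs1 : 1 ≤ (Finset.univ.filter (fun a : F => IsSquare a)).card :=
      Finset.card_pos.mpr ⟨0, h0mem⟩
    calc ∑ a ∈ (Finset.univ.filter (fun a : F => IsSquare a)).erase 0, quadraticChar F a
        = ∑ _a ∈ (Finset.univ.filter (fun a : F => IsSquare a)).erase 0, (1 : ℤ) := by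
          refine Finset.sum_congr rfl fun a ha => ?_
          have ha' := Finset.mem_erase.mp ha
          rw [quadraticChar_one_iff_isSquare ha'.1]
          exact (Finset.mem_filter.mp ha'.2).2
      _ = (((Finset.univ.filter (fun a : F => IsSquare a)).card - 1 : ℕ) : ℤ) := by
          rw [Finset.sum_const, Finset.card_erase_of_mem h0mem]; simp
      _ = ((Finset.univ.filter (fun a : F => IsSquare a)).card : ℤ) - 1 := by
          push_cast [Nat.cast_sub hs1]; ring
  have hns : (∑ a ∈ Finset.univ.filter (fun a : F => ¬ IsSquare a), quadraticChar F a)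
      = -((Finset.univ.filter (fun a : F => ¬ IsSquare a)).card : ℤ) := by
    calc ∑ a ∈ Finset.univ.filter (fun a : F => ¬ IsSquare a), quadraticChar F a
        = ∑ _a ∈ Finset.univ.filter (fun a : F => ¬ IsSquare a), (-1 : ℤ) := by
          refine Finset.sum_congr rfl fun a ha => ?_
          rw [quadraticChar_neg_one_iff_not_isSquare]
          exact (Finset.mem_filter.mp ha).2
      _ = -((Finset.univ.filter (fun a : F => ¬ IsSquare a)).card : ℤ) := by
          rw [Finset.sum_const]; simp
  have htot : (Finset.univ.filter (fun a : F => IsSquare a)).card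
      + (Finset.univ.filter (fun a : F => ¬ IsSquare a)).card = Fintype.card F := by
    rw [Finset.card_filter_add_card_filter_not, Finset.card_univ]
  have hset : {a : F | ¬ IsSquare a}.ncard
      = (Finset.univ.filter (fun a : F => ¬ IsSquare a)).card := by
    rw [Set.ncard_eq_toFinset_card', Set.toFinset_setOf]
  rw [hset]
  rw [hss, hns, hsum] at hsplit
  omega

end Aux

/-- Let `q` be odd with `q ≡ -1 (mod 3)` and `ρ ∈ F_q^*`. The number of
`γ ∈ F_q^*` such that the cubic `t^3 - 3γt^2 - ρ` has exactly one root in `F_q`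
equals `(q-3)/2`. -/
theorem stmt11 {F : Type*} [Field F] [Fintype F]
    (hodd : Fintype.card F % 2 = 1) (hq : Fintype.card F % 3 = 2)
    (ρ : F) (hρ : ρ ≠ 0) :
    Set.ncard {γ : F | γ ≠ 0 ∧ ∃! t : F, t ^ 3 - 3 * γ * t ^ 2 - ρ = 0} =
      (Fintype.card F - 3) / 2 := by
  classical
  have hchar2 : ringChar F ≠ 2 := by
    intro h
    rw [FiniteField.even_card_iff_char_two] at h
    omega
  have hchar3 : ringChar F ≠ 3 := by
    intro h
    haveI : CharP F 3 := h ▸ ringChar.charP F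
    obtain ⟨n, -, hn⟩ := FiniteField.card F 3
    rw [hn] at hq
    have : (3 : ℕ) ∣ 3 ^ (n : ℕ) := dvd_pow_self 3 n.pos.ne'
    omega
  have hprime : (ringChar F).Prime := CharP.char_is_prime F _
  have h2 : (2 : F) ≠ 0 := by
    intro h
    apply hchar2
    have hdvd : ringChar F ∣ 2 :=
      (CharP.cast_eq_zero_iff F (ringChar F) 2).mp (by exact_mod_cast h)
    rcases (Nat.Prime.eq_one_or_self_of_dvd Nat.prime_two _ hdvd) with h1 | h1
    · exact absurd h1 hprime.ne_one
    · exact h1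
  have h3 : (3 : F) ≠ 0 := by
    intro h
    apply hchar3
    have hdvd : ringChar F ∣ 3 :=
      (CharP.cast_eq_zero_iff F (ringChar F) 3).mp (by exact_mod_cast h)
    rcases (Nat.Prime.eq_one_or_self_of_dvd Nat.prime_three _ hdvd) with h1 | h1
    · exact absurd h1 hprime.ne_one
    · exact h1
  have h4 : (4 : F) ≠ 0 := by
    intro h
    have h' : (2 : F) * 2 = 0 := by linear_combination h
    rcases mul_eq_zero.mp h' with h'' | h'' <;> exact h2 h''
  have h6 : (6 : F) ≠ 0 := by
    intro h
    have h' : (2 : F) * 3 = 0 := by linear_combination h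
    rcases mul_eq_zero.mp h' with h'' | h''
    · exact h2 h''
    · exact h3 h''
  have hcube := aux_cube_inj (F := F) hq
  -- `-3` is not a square
  have hns3 : ¬ IsSquare (-3 : F) := by
    rintro ⟨d, hd⟩
    set ω : F := (-1 + d) / 2 with hω
    have hω2 : ω * 2 = -1 + d := div_mul_cancel₀ _ h2
    have hω3 : ω ^ 3 = 1 ^ 3 := by
      have key : (ω ^ 3 - 1) * 8 = 0 := by
        linear_combination (4 * ω ^ 2 + ω * (2 * d - 2) + (d - 1) ^ 2) * hω2
          + (3 - d) * hd
      have h8 : (8 : F) ≠ 0 := by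
        intro h
        have h' : (2 : F) * 4 = 0 := by linear_combination h
        rcases mul_eq_zero.mp h' with h'' | h''
        · exact h2 h''
        · exact h4 h''
      rcases mul_eq_zero.mp key with h' | h'
      · linear_combination h'
      · exact absurd h' h8
    have hω1 : ω = 1 := hcube hω3
    have hd3 : d = 3 := by
      have := hω2
      rw [hω1, one_mul] at this
      linear_combination -this
    rw [hd3] at hd
    have h12 : (4 : F) * 3 = 0 := by linear_combination -hd
    rcases mul_eq_zero.mp h12 with h' | h'
    · exact h4 h'
    · exact h3 h'
  -- nonsquare times nonzero square is a nonsquare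
  have hnsmul : ∀ x y : F, ¬ IsSquare x → y ≠ 0 → ¬ IsSquare (x * y ^ 2) := by
    rintro x y hx hy ⟨z, hz⟩
    exact hx ⟨z / y, by field_simp at hz ⊢; linear_combination hz⟩
  have hc : ¬ IsSquare (-3 * ρ ^ 2 : F) := hnsmul _ _ hns3 hρ
  -- the auxiliary sets
  set S : Set F := {γ : F | γ ≠ 0 ∧ ∃! t : F, t ^ 3 - 3 * γ * t ^ 2 - ρ = 0} with hS
  set T : Set F := {t : F | t ^ 3 ≠ ρ ∧ ¬ IsSquare (ρ * (ρ - 4 * t ^ 3))} with hT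
  set W : Set F := {x : F | ¬ IsSquare x ∧ x ≠ -3 * ρ ^ 2} with hW
  set ψ : F → F := fun t => (t ^ 3 - ρ) / (3 * t ^ 2) with hψ
  -- elements of T are nonzero
  have hTne : ∀ t : F, t ∈ T → t ≠ 0 := by
    rintro t ⟨ht1, ht2⟩ rfl
    exact ht2 ⟨ρ, by ring⟩
  -- key factorization
  have hfact : ∀ t s : F, t ≠ 0 →
      (s ^ 3 - 3 * (ψ t) * s ^ 2 - ρ) * t ^ 2
        = (s - t) * (s ^ 2 * t ^ 2 + ρ * s + ρ * t) := by
    intro t s ht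
    simp only [hψ]
    field_simp
    ring
  -- each t is a root of its own cubic
  have hroot_self : ∀ t : F, t ≠ 0 → t ^ 3 - 3 * (ψ t) * t ^ 2 - ρ = 0 := by
    intro t ht
    have h := hfact t t ht
    have hz : (t ^ 3 - 3 * (ψ t) * t ^ 2 - ρ) * t ^ 2 = 0 := by rw [h]; ring
    rcases mul_eq_zero.mp hz with h' | h'
    · exact h'
    · exact absurd h' (pow_ne_zero 2 ht)
  -- t ∈ T gives an element of S
  have hTS : ∀ t : F, t ∈ T → ψ t ∈ S := by
    intro t htT
    obtain ⟨ht1, ht2⟩ := htT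
    have ht : t ≠ 0 := hTne t ⟨ht1, ht2⟩
    have ht2' : (t : F) ^ 2 ≠ 0 := pow_ne_zero 2 ht
    constructor
    · simp only [hψ]
      exact div_ne_zero (sub_ne_zero.mpr ht1) (mul_ne_zero h3 ht2')
    · refine ⟨t, hroot_self t ht, ?_⟩
      intro s hs
      by_contra hst
      have hz : (s - t) * (s ^ 2 * t ^ 2 + ρ * s + ρ * t) = 0 := by
        rw [← hfact t s ht, hs, zero_mul]
      rcases mul_eq_zero.mp hz with h | hquad
      · exact hst (by linear_combination h)
      · exact ht2 ⟨2 * s * t ^ 2 + ρ, by linear_combination (-4 * t ^ 2) * hquad⟩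
  -- injectivity of ψ on T
  have hinj : Set.InjOn ψ T := by
    intro t1 h1 t2 h2' heq
    obtain ⟨-, t', ht', huniq⟩ := hTS t1 h1
    have e1 := hroot_self t1 (hTne t1 h1)
    have e2 := hroot_self t2 (hTne t2 h2')
    rw [← heq] at e2
    rw [huniq t1 e1, huniq t2 e2]
  -- surjectivity of ψ from T onto S
  have hsurj : Set.SurjOn ψ T S := by
    rintro γ ⟨hγ, t, ht, huniq⟩
    have htne : t ≠ 0 := by
      rintro rfl
      apply hρ
      linear_combination -ht
    have ht2' : (t : F) ^ 2 ≠ 0 := pow_ne_zero 2 htne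
    have hψt : ψ t = γ := by
      simp only [hψ]
      rw [div_eq_iff (mul_ne_zero h3 ht2')]
      linear_combination ht
    have ht3 : t ^ 3 ≠ ρ := by
      intro h
      apply hγ
      have h' : (3 : F) * (γ * t ^ 2) = 0 := by linear_combination h - ht
      rcases mul_eq_zero.mp h' with h'' | h''
      · exact absurd h'' h3
      · rcases mul_eq_zero.mp h'' with h''' | h'''
        · exact h'''
        · exact absurd h''' ht2'
    refine ⟨t, ⟨ht3, ?_⟩, hψt⟩
    rintro ⟨d, hd⟩
    -- the roots of the quadratic factor give roots of the cubic
    have hroot : ∀ e : F, e * e = ρ * (ρ - 4 * t ^ 3) →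
        ((-ρ + e) / (2 * t ^ 2)) ^ 3 - 3 * γ * ((-ρ + e) / (2 * t ^ 2)) ^ 2 - ρ = 0 := by
      intro e he
      set s : F := (-ρ + e) / (2 * t ^ 2) with hsdef
      have hs : s * (2 * t ^ 2) = -ρ + e := div_mul_cancel₀ _ (mul_ne_zero h2 ht2')
      have key : (s ^ 2 * t ^ 2 + ρ * s + ρ * t) * (4 * t ^ 2) = 0 := by
        linear_combination (2 * s * t ^ 2 + ρ + e) * hs + he
      have hquad : s ^ 2 * t ^ 2 + ρ * s + ρ * t = 0 := by
        rcases mul_eq_zero.mp key with h' | h'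
        · exact h'
        · exact absurd h' (mul_ne_zero h4 ht2')
      have hfs := hfact t s htne
      rw [hψt] at hfs
      have hz : (s ^ 3 - 3 * γ * s ^ 2 - ρ) * t ^ 2 = 0 := by
        rw [hfs, hquad, mul_zero]
      rcases mul_eq_zero.mp hz with h' | h'
      · exact h'
      · exact absurd h' ht2'
    have hr1 := huniq _ (hroot d (by linear_combination -hd))
    have hr2 := huniq _ (hroot (-d) (by linear_combination -hd))
    have hd0 : d = 0 := by
      have heq2 : (-ρ + d) / (2 * t ^ 2) = (-ρ + -d) / (2 * t ^ 2) := by rw [hr1, hr2]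
      rw [div_eq_div_iff (mul_ne_zero h2 ht2') (mul_ne_zero h2 ht2')] at heq2
      have h' := mul_right_cancel₀ (mul_ne_zero h2 ht2') heq2
      have h2d : (2 : F) * d = 0 := by linear_combination h'
      rcases mul_eq_zero.mp h2d with h'' | h''
      · exact absurd h'' h2
      · exact h''
    have hρ4 : ρ = 4 * t ^ 3 := by
      rw [hd0] at hd
      have h' : ρ * (ρ - 4 * t ^ 3) = 0 := by linear_combination hd
      rcases mul_eq_zero.mp h' with h'' | h''
      · exact absurd h'' hρ
      · linear_combination h''
    rw [hd0] at hr1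
    rw [div_eq_iff (mul_ne_zero h2 ht2')] at hr1
    have h6t : (6 : F) * t ^ 3 = 0 := by linear_combination -hr1 - hρ4
    rcases mul_eq_zero.mp h6t with h' | h'
    · exact h6 h'
    · exact htne ((pow_eq_zero_iff three_ne_zero).mp h')
  have hbij : Set.BijOn ψ T S := ⟨fun t ht => hTS t ht, hinj, hsurj⟩
  have hST : S.ncard = T.ncard := by
    rw [← hbij.image_eq, Set.ncard_image_of_injOn hinj]
  -- second bijection: w t = ρ (ρ - 4 t³)
  set w : F → F := fun t => ρ * (ρ - 4 * t ^ 3) with hw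
  have hwinj : Function.Injective w := by
    intro a b hab
    simp only [hw] at hab
    apply hcube
    simp only
    have h1 : ρ - 4 * a ^ 3 = ρ - 4 * b ^ 3 := mul_left_cancel₀ hρ hab
    have h2' : (4 : F) * a ^ 3 = 4 * b ^ 3 := by linear_combination -h1
    exact mul_left_cancel₀ h4 h2'
  have hwsurj : Function.Surjective w := Finite.surjective_of_injective hwinj
  have hTW : ∀ t : F, t ∈ T ↔ w t ∈ W := by
    intro t
    constructor
    · rintro ⟨ht1, ht2⟩
      refine ⟨ht2, ?_⟩
      intro h
      apply ht1
      simp only [hw] at h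
      have h1 : ρ - 4 * t ^ 3 = -3 * ρ :=
        mul_left_cancel₀ hρ (show ρ * (ρ - 4 * t ^ 3) = ρ * (-3 * ρ) by linear_combination h)
      have h2' : (4 : F) * t ^ 3 = 4 * ρ := by linear_combination -h1
      exact mul_left_cancel₀ h4 h2'
    · rintro ⟨h1, h2'⟩
      refine ⟨?_, h1⟩
      intro h
      apply h2'
      show ρ * (ρ - 4 * t ^ 3) = -3 * ρ ^ 2
      rw [h]
      ring
  have hwbij : Set.BijOn w T W := by
    refine ⟨fun t ht => (hTW t).mp ht, hwinj.injOn, ?_⟩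
    intro x hx
    obtain ⟨t, rfl⟩ := hwsurj x
    exact ⟨t, (hTW t).mpr hx, rfl⟩
  have hTWcard : T.ncard = W.ncard := by
    rw [← hwbij.image_eq, Set.ncard_image_of_injOn hwinj.injOn]
  -- compute the cardinality of W
  have hWcard : W.ncard = (Fintype.card F - 1) / 2 - 1 := by
    have hWd : W = {x : F | ¬ IsSquare x} \ {(-3 * ρ ^ 2 : F)} := by
      rw [hW]
      ext x
      simp only [Set.mem_setOf_eq, Set.mem_diff, Set.mem_singleton_iff]
    rw [hWd, Set.ncard_diff_singleton_of_mem (by exact hc),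
      aux_card_nonsquares hchar2]
  have hcard5 : 5 ≤ Fintype.card F := by
    have := Fintype.card_pos (α := F)
    omega
  rw [hST, hTWcard, hWcard]
  omega
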